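/- Let α = k/(k+1) and fix an integer i ≥ 0. Then k·α^i(1−α^i) + Σ_{j=1}^{i} α^j(1−α^j) = (α − α^{2i+1})/(1 − α²), and this quantity is strictly less than k/2 + 1/4. -/

import Mathlib

/-- With `α = k/(k+1)` and `i ≥ 0`:
`k·α^i(1−α^i) + Σ_{j=1}^{i} α^j(1−α^j) = (α − α^{2i+1})/(1 − α²)`, and this
quantity is strictly less than `k/2 + 1/4`. -/
theorem stmt16 (k : ℕ) (hk : 1 ≤ k) (α : ℝ) (hα : α = (k : ℝ) / (k + 1))
    (i : ℕ) :
    ((k : ℝ) * α ^ i * (1 - α ^ i) + ∑ j ∈ Finset.Icc 1 i, α ^ j * (1 - α ^ j)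
      = (α - α ^ (2 * i + 1)) / (1 - α ^ 2)) ∧
    (α - α ^ (2 * i + 1)) / (1 - α ^ 2) < (k : ℝ) / 2 + 1 / 4 := by
  set K : ℝ := (k : ℝ) with hK
  have hK1 : (1 : ℝ) ≤ K := by rw [hK]; exact_mod_cast hk
  have hKpos : (0 : ℝ) < K + 1 := by linarith
  have hα0 : 0 < α := by
    rw [hα]; positivity
  have hα1 : α < 1 := by
    rw [hα, div_lt_one hKpos]; linarith
  have hrel : K * (1 - α) = α := by
    rw [hα]; field_simp; ring
  have h1α : (0:ℝ) < 1 - α := by linarith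
  have h2pos : (0:ℝ) < 1 - α ^ 2 := by nlinarith
  have h2 : (1:ℝ) - α ^ 2 ≠ 0 := ne_of_gt h2pos
  -- multiplied-out identity, by induction
  have P : ∀ n : ℕ,
      (K * α ^ n * (1 - α ^ n) + ∑ j ∈ Finset.Icc 1 n, α ^ j * (1 - α ^ j))
        * (1 - α ^ 2) = α - α ^ (2 * n + 1) := by
    intro n
    induction n with
    | zero => simp
    | succ m ih =>
      rw [Finset.sum_Icc_succ_top (Nat.le_add_left 1 m)]
      have h2m : α ^ (2 * (m + 1) + 1) = (α ^ m) ^ 2 * α ^ 3 := by ring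
      have h2m' : α ^ (2 * m + 1) = (α ^ m) ^ 2 * α := by ring
      rw [h2m]
      rw [h2m'] at ih
      linear_combination ih +
        ((1 - α ^ 2) * ((α ^ m) ^ 2 * (1 + α) - α ^ m)) * hrel
  have heq : (K * α ^ i * (1 - α ^ i) + ∑ j ∈ Finset.Icc 1 i, α ^ j * (1 - α ^ j))
      = (α - α ^ (2 * i + 1)) / (1 - α ^ 2) := by
    rw [eq_div_iff h2]; exact P i
  refine ⟨heq, ?_⟩
  have hle : (α - α ^ (2 * i + 1)) / (1 - α ^ 2) ≤ α / (1 - α ^ 2) := by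
    gcongr
    have := pow_nonneg hα0.le (2 * i + 1)
    linarith
  have hlt : α / (1 - α ^ 2) < K / 2 + 1 / 4 := by
    rw [div_lt_iff₀ h2pos]
    have hsq : 0 < (1 - α) ^ 2 := by positivity
    nlinarith [hrel, hsq]
  exact hle.trans_lt hlt
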